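/- arXiv:0706.4069 — 3 statements merged into one kernel-verified Lean document; each statement's English description precedes it below -/
import Mathlib

section
/- Let (η_n)_{n∈ℤ}, (p_n)_{n∈ℤ}, (q_n)_{n∈ℤ} be real sequences with p_n + q_n = 1, 0 < p_n < 1, 0 ≤ η_n < 1, satisfying η_n = q_n + p_n η_{n+1} η_n for all n. Set δ_n = 1 - η_n and ρ̂(n) = q_n/p_n. Then for all n ≤ -1: δ_n = (ρ̂(n) ρ̂(n+1) ⋯ ρ̂(-1))^{-1} · η_n η_{n+1} ⋯ η_{-1} · δ_0. -/
/-- The algebraic identity (2.70)–(2.71): if `η n = q n + p n * η (n+1) * η n` with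
`p n + q n = 1`, `0 < p n < 1`, `0 ≤ η n < 1`, then for `n ≤ -1`,
`δ n = (∏ ρ̂)⁻¹ * (∏ η) * δ 0` where `δ n = 1 - η n` and `ρ̂ n = q n / p n`. -/
theorem delta_prod_identity (η p q : ℤ → ℝ)
    (hpq : ∀ n, p n + q n = 1) (hp : ∀ n, 0 < p n ∧ p n < 1)
    (hη : ∀ n, 0 ≤ η n ∧ η n < 1)
    (hrec : ∀ n, η n = q n + p n * η (n + 1) * η n) :
    ∀ n : ℤ, n ≤ -1 →
      1 - η n = (∏ j ∈ Finset.Icc n (-1 : ℤ), q j / p j)⁻¹ *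
        (∏ j ∈ Finset.Icc n (-1 : ℤ), η j) * (1 - η 0) := by
  have hq : ∀ n, 0 < q n := fun n => by have := hpq n; have := (hp n).2; linarith
  -- key one-step identity: (1 - η n) = (q n / p n)⁻¹ * η n * (1 - η (n+1))
  have key : ∀ n : ℤ, 1 - η n = (q n / p n)⁻¹ * η n * (1 - η (n + 1)) := by
    intro n
    have hp0 := (hp n).1
    have hq0 := hq n
    field_simp
    linear_combination (-1 : ℝ) * (hrec n) - η n * (hpq n)
  intro n
  refine Int.le_induction_down (motive := fun k _ => 1 - η k =
      (∏ j ∈ Finset.Icc k (-1 : ℤ), q j / p j)⁻¹ *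
        (∏ j ∈ Finset.Icc k (-1 : ℤ), η j) * (1 - η 0)) (m := -1) ?_ (fun m hm ih => ?_) n
  · beta_reduce
    rw [show Finset.Icc (-1 : ℤ) (-1) = {(-1 : ℤ)} by rfl]
    simp only [Finset.prod_singleton]
    have := key (-1)
    norm_num at this ⊢
    exact this
  · beta_reduce at ih ⊢
    have hins : Finset.Icc (m - 1) (-1 : ℤ) = insert (m - 1) (Finset.Icc m (-1)) := by
      ext x
      simp only [Finset.mem_insert, Finset.mem_Icc]
      omega
    have hnotmem : (m - 1) ∉ Finset.Icc m (-1 : ℤ) := by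
      simp only [Finset.mem_Icc]; omega
    rw [hins, Finset.prod_insert hnotmem, Finset.prod_insert hnotmem]
    have := key (m - 1)
    rw [show m - 1 + 1 = m by ring] at this
    rw [this, ih]
    rw [mul_inv]
    ring
end

section
/- Let κ ∈ (0, 1/2], integers n₀ ≥ 3 and L₀ ≥ 1, and let ρ̂(j) ∈ [κ^{2L₀}, κ^{-2L₀}] for -n₀+1 ≤ j ≤ n₀+1. Define ∏_{a,b} = ∏_{j=a+1}^{b} ρ̂(j)^{-1} (with ∏_{a,a} = 1), f(n₀+2) = 0, f(n₀+1) = 1, and f(i) = ∑_{i ≤ m ≤ n₀+1} ∏_{m, n₀+1} for i ≤ n₀. If κ^{4n₀L₀}·(2n₀+1)·κ^{-4n₀L₀}·κ^{9·2n₀L₀} ≤ κ^{4n₀L₀} (which holds whenever L₀ is large enough that (2n₀+1)κ^{5n₀L₀} ≤ κ^{4n₀L₀}), then f(1-n₀) - f(0) - f(1-n₀)·κ^{18n₀L₀} ≥ ∏_{-n₀+1, n₀+1}. -/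
/-- The algebraic estimate (A.12) from Appendix A.1. With
`Π_{a,b} = ∏_{j=a+1}^{b} ρ̂(j)⁻¹` and
`f(i) = ∑_{i ≤ m ≤ n₀+1} Π_{m, n₀+1}`, if
`κ^{4n₀L₀} (2n₀+1) κ^{-4n₀L₀} κ^{18n₀L₀} ≤ κ^{4n₀L₀}` then
`f(1-n₀) - f(0) - f(1-n₀) κ^{18n₀L₀} ≥ Π_{-n₀+1, n₀+1}`. -/
theorem estimate_A12 (κ : ℝ) (hκ0 : 0 < κ) (hκ : κ ≤ 1/2)
    (n₀ L₀ : ℕ) (hn₀ : 3 ≤ n₀) (hL₀ : 1 ≤ L₀)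
    (ρ : ℤ → ℝ)
    (hρ : ∀ j ∈ Finset.Icc (-(n₀ : ℤ) + 1) ((n₀ : ℤ) + 1),
      κ ^ (2 * L₀) ≤ ρ j ∧ ρ j ≤ (κ ^ (2 * L₀))⁻¹)
    (f : ℤ → ℝ)
    (hf : ∀ i : ℤ, i ≤ (n₀ : ℤ) + 1 →
      f i = ∑ m ∈ Finset.Icc i ((n₀ : ℤ) + 1),
        ∏ j ∈ Finset.Icc (m + 1) ((n₀ : ℤ) + 1), (ρ j)⁻¹)
    (hcond : κ ^ (4 * n₀ * L₀) * (2 * (n₀ : ℝ) + 1) * (κ ^ (4 * n₀ * L₀))⁻¹ *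
        κ ^ (18 * n₀ * L₀) ≤ κ ^ (4 * n₀ * L₀)) :
    f (1 - (n₀ : ℤ)) - f 0 - f (1 - (n₀ : ℤ)) * κ ^ (18 * n₀ * L₀) ≥
      ∏ j ∈ Finset.Icc (-(n₀ : ℤ) + 2) ((n₀ : ℤ) + 1), (ρ j)⁻¹ := by
  have hκ1 : κ ≤ 1 := hκ.trans (by norm_num)
  set a : ℝ := κ ^ (2 * L₀) with ha_def
  have ha0 : 0 < a := pow_pos hκ0 _
  have ha1 : a ≤ 1 := pow_le_one₀ hκ0.le hκ1
  have ha1' : 1 ≤ a⁻¹ := (one_le_inv₀ ha0).mpr ha1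
  set P : ℤ → ℝ := fun m => ∏ j ∈ Finset.Icc (m + 1) ((n₀ : ℤ) + 1), (ρ j)⁻¹ with hP
  -- inverse bounds
  have hinv : ∀ j ∈ Finset.Icc (-(n₀ : ℤ) + 1) ((n₀ : ℤ) + 1),
      a ≤ (ρ j)⁻¹ ∧ (ρ j)⁻¹ ≤ a⁻¹ := by
    intro j hj
    have h1 := (hρ j hj).1
    have h2 := (hρ j hj).2
    have hρpos : 0 < ρ j := lt_of_lt_of_le ha0 h1
    constructor
    · rw [← inv_inv a]
      exact inv_anti₀ hρpos h2
    · exact inv_anti₀ ha0 h1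
  -- cardinalities
  have hcardP : ∀ m : ℤ, 1 - (n₀ : ℤ) ≤ m →
      (Finset.Icc (m + 1) ((n₀ : ℤ) + 1)).card ≤ 2 * n₀ := by
    intro m hm
    rw [Int.card_Icc]
    omega
  have hsub : ∀ m : ℤ, 1 - (n₀ : ℤ) ≤ m →
      Finset.Icc (m + 1) ((n₀ : ℤ) + 1) ⊆ Finset.Icc (-(n₀ : ℤ) + 1) ((n₀ : ℤ) + 1) := by
    intro m hm
    apply Finset.Icc_subset_Icc <;> omega
  -- lower / upper bounds on P m
  have hPlb : ∀ m : ℤ, 1 - (n₀ : ℤ) ≤ m → a ^ (2 * n₀) ≤ P m := by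
    intro m hm
    calc a ^ (2 * n₀) ≤ a ^ (Finset.Icc (m + 1) ((n₀ : ℤ) + 1)).card :=
          pow_le_pow_of_le_one ha0.le ha1 (hcardP m hm)
      _ = ∏ j ∈ Finset.Icc (m + 1) ((n₀ : ℤ) + 1), a := by
          rw [Finset.prod_const]
      _ ≤ P m := by
          apply Finset.prod_le_prod (fun j _ => ha0.le)
          intro j hj
          exact (hinv j (hsub m hm hj)).1
  have hPub : ∀ m : ℤ, 1 - (n₀ : ℤ) ≤ m → P m ≤ (a⁻¹) ^ (2 * n₀) := by
    intro m hm
    calc P m ≤ ∏ j ∈ Finset.Icc (m + 1) ((n₀ : ℤ) + 1), a⁻¹ := by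
          apply Finset.prod_le_prod
          · intro j hj
            exact (inv_pos.mpr (lt_of_lt_of_le ha0 (hρ j (hsub m hm hj)).1)).le
          · intro j hj
            exact (hinv j (hsub m hm hj)).2
      _ = (a⁻¹) ^ (Finset.Icc (m + 1) ((n₀ : ℤ) + 1)).card := Finset.prod_const _
      _ ≤ (a⁻¹) ^ (2 * n₀) := pow_le_pow_right₀ ha1' (hcardP m hm)
  have hPnn : ∀ m : ℤ, 1 - (n₀ : ℤ) ≤ m → 0 ≤ P m := fun m hm =>
    le_trans (pow_nonneg ha0.le _) (hPlb m hm)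
  -- decompositions
  have hsplit : f (1 - (n₀ : ℤ)) = (∑ m ∈ Finset.Icc (1 - (n₀ : ℤ)) (-1 : ℤ), P m) + f 0 := by
    rw [hf (1 - (n₀ : ℤ)) (by omega), hf 0 (by omega)]
    rw [← Finset.sum_union]
    · congr 1
      ext x
      simp only [Finset.mem_union, Finset.mem_Icc]
      omega
    · rw [Finset.disjoint_left]
      intro x hx hx'
      simp only [Finset.mem_Icc] at hx hx'
      omega
  have hsplit2 : (∑ m ∈ Finset.Icc (1 - (n₀ : ℤ)) (-1 : ℤ), P m)
      = P (1 - (n₀ : ℤ)) + ∑ m ∈ Finset.Icc (2 - (n₀ : ℤ)) (-1 : ℤ), P m := by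
    have : Finset.Icc (1 - (n₀ : ℤ)) (-1 : ℤ)
        = insert (1 - (n₀ : ℤ)) (Finset.Icc (2 - (n₀ : ℤ)) (-1 : ℤ)) := by
      ext x
      simp only [Finset.mem_insert, Finset.mem_Icc]
      omega
    rw [this, Finset.sum_insert (by simp only [Finset.mem_Icc]; omega)]
  have hRHS : (∏ j ∈ Finset.Icc (-(n₀ : ℤ) + 2) ((n₀ : ℤ) + 1), (ρ j)⁻¹) = P (1 - (n₀ : ℤ)) := by
    simp only [hP]
    have h : (1 - (n₀ : ℤ)) + 1 = -(n₀ : ℤ) + 2 := by ring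
    rw [h]
  -- power identities
  have hpow4 : a ^ (2 * n₀) = κ ^ (4 * n₀ * L₀) := by
    rw [ha_def, ← pow_mul]
    congr 1
    ring
  -- main inequality: S₂ ≥ f(1-n₀) * κ^{18n₀L₀}
  have hfub : f (1 - (n₀ : ℤ)) ≤ (2 * (n₀ : ℝ) + 1) * (a⁻¹) ^ (2 * n₀) := by
    rw [hf (1 - (n₀ : ℤ)) (by omega)]
    calc (∑ m ∈ Finset.Icc (1 - (n₀ : ℤ)) ((n₀ : ℤ) + 1), P m)
        ≤ ∑ m ∈ Finset.Icc (1 - (n₀ : ℤ)) ((n₀ : ℤ) + 1), (a⁻¹) ^ (2 * n₀) := by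
          apply Finset.sum_le_sum
          intro m hm
          exact hPub m (Finset.mem_Icc.mp hm).1
      _ = ((Finset.Icc (1 - (n₀ : ℤ)) ((n₀ : ℤ) + 1)).card : ℝ) * (a⁻¹) ^ (2 * n₀) := by
          rw [Finset.sum_const, nsmul_eq_mul]
      _ = (2 * (n₀ : ℝ) + 1) * (a⁻¹) ^ (2 * n₀) := by
          congr 1
          rw [Int.card_Icc]
          have : ((n₀ : ℤ) + 1 + 1 - (1 - (n₀ : ℤ))).toNat = 2 * n₀ + 1 := by omega
          rw [this]
          push_cast
          ring
  have hfnn : 0 ≤ f (1 - (n₀ : ℤ)) := by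
    rw [hf (1 - (n₀ : ℤ)) (by omega)]
    apply Finset.sum_nonneg
    intro m hm
    exact hPnn m (Finset.mem_Icc.mp hm).1
  have hnum : (2 * (n₀ : ℝ) + 1) * (a⁻¹) ^ (2 * n₀) * κ ^ (18 * n₀ * L₀) ≤ κ ^ (4 * n₀ * L₀) := by
    have hainv : (a⁻¹) ^ (2 * n₀) = (κ ^ (4 * n₀ * L₀))⁻¹ := by
      rw [inv_pow, hpow4]
    rw [hainv]
    have h18 : κ ^ (18 * n₀ * L₀)
        = κ ^ (4 * n₀ * L₀) * (κ ^ (4 * n₀ * L₀) * κ ^ (10 * n₀ * L₀)) := by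
      rw [← pow_add, ← pow_add]
      congr 1
      ring
    have hk4 : (0:ℝ) < κ ^ (4 * n₀ * L₀) := pow_pos hκ0 _
    rw [h18]
    have key : (2 * (n₀ : ℝ) + 1) * κ ^ (10 * n₀ * L₀) ≤ 1 := by
      have h1 : κ ^ (10 * n₀ * L₀) ≤ (1/2 : ℝ) ^ (10 * n₀ * L₀) :=
        pow_le_pow_left₀ hκ0.le hκ _
      have h2 : (2 * (n₀ : ℝ) + 1) * (1/2 : ℝ) ^ (10 * n₀ * L₀) ≤ 1 := by
        rw [div_pow, one_pow, mul_div_assoc', div_le_one (by positivity)]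
        have : (2 * n₀ + 1 : ℕ) ≤ 2 ^ (10 * n₀ * L₀) := by
          calc 2 * n₀ + 1 ≤ 2 ^ (2 * n₀ + 1) := (Nat.lt_two_pow_self).le
            _ ≤ 2 ^ (10 * n₀ * L₀) := Nat.pow_le_pow_right (by norm_num) (by nlinarith)
        calc (2 * (n₀:ℝ) + 1) * 1 = ((2 * n₀ + 1 : ℕ) : ℝ) := by push_cast; ring
          _ ≤ ((2 ^ (10 * n₀ * L₀) : ℕ) : ℝ) := by exact_mod_cast this
          _ = 2 ^ (10 * n₀ * L₀) := by push_cast; ring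
      calc (2 * (n₀ : ℝ) + 1) * κ ^ (10 * n₀ * L₀)
          ≤ (2 * (n₀ : ℝ) + 1) * (1/2 : ℝ) ^ (10 * n₀ * L₀) := by
            apply mul_le_mul_of_nonneg_left h1 (by positivity)
        _ ≤ 1 := h2
    calc (2 * (n₀ : ℝ) + 1) * (κ ^ (4 * n₀ * L₀))⁻¹
          * (κ ^ (4 * n₀ * L₀) * (κ ^ (4 * n₀ * L₀) * κ ^ (10 * n₀ * L₀)))
        = ((2 * (n₀ : ℝ) + 1) * κ ^ (10 * n₀ * L₀)) * κ ^ (4 * n₀ * L₀) := by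
          field_simp
      _ ≤ 1 * κ ^ (4 * n₀ * L₀) := mul_le_mul_of_nonneg_right key hk4.le
      _ = κ ^ (4 * n₀ * L₀) := one_mul _
  -- assemble
  have hS2 : f (1 - (n₀ : ℤ)) * κ ^ (18 * n₀ * L₀)
      ≤ ∑ m ∈ Finset.Icc (2 - (n₀ : ℤ)) (-1 : ℤ), P m := by
    have hmem : (-1 : ℤ) ∈ Finset.Icc (2 - (n₀ : ℤ)) (-1 : ℤ) := by
      simp only [Finset.mem_Icc]; omega
    have hsingle : P (-1) ≤ ∑ m ∈ Finset.Icc (2 - (n₀ : ℤ)) (-1 : ℤ), P m := by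
      apply Finset.single_le_sum _ hmem
      intro m hm
      exact hPnn m (by have := (Finset.mem_Icc.mp hm).1; omega)
    calc f (1 - (n₀ : ℤ)) * κ ^ (18 * n₀ * L₀)
        ≤ (2 * (n₀ : ℝ) + 1) * (a⁻¹) ^ (2 * n₀) * κ ^ (18 * n₀ * L₀) := by
          apply mul_le_mul_of_nonneg_right hfub (pow_nonneg hκ0.le _)
      _ ≤ κ ^ (4 * n₀ * L₀) := hnum
      _ = a ^ (2 * n₀) := hpow4.symm
      _ ≤ P (-1) := hPlb (-1) (by omega)
      _ ≤ _ := hsingle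
  have hgoal : f (1 - (n₀ : ℤ)) - f 0
      = P (1 - (n₀ : ℤ)) + ∑ m ∈ Finset.Icc (2 - (n₀ : ℤ)) (-1 : ℤ), P m := by
    rw [hsplit, hsplit2]; ring
  rw [ge_iff_le, hRHS]
  linarith [hS2, hgoal]
end

section
/- Let ρ: Ω → [0, M] be a random variable with 1 ≤ M < ∞, let q = ρ/(1+ρ) ∈ [0,1], and suppose there exist constants γ ∈ (1/2, 1), c > 0 and L ≥ 1 such that E[q] ≤ 2(d-1)e^{-cL^γ} and ρ ≤ κ^{-(L+3)} almost surely (with κ ∈ (0,1), d ≥ 2). Then for every a ∈ (0,1) and c' ∈ (0, c): E[ρ^a] ≤ (2(d-1))^a e^{(c'-c)aL^γ} + 4(d-1) κ^{-a(L+3)} e^{-cL^γ}. -/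
open MeasureTheory

/-- Pointwise certificate: for `0 ≤ r ≤ B`, `1 ≤ B`, `0 < m`, `0 < a < 1`,
`r ^ a ≤ (1-a) m^a + a m^(a-1) (r/(1+r)) + 2 B^a (r/(1+r))`. -/
lemma moment_bound_pointwise {r B m a : ℝ} (hr : 0 ≤ r) (hrB : r ≤ B) (hB : 1 ≤ B)
    (hm : 0 < m) (ha0 : 0 < a) (ha1 : a < 1) :
    r ^ a ≤ (1 - a) * m ^ a + a * m ^ (a - 1) * (r / (1 + r)) + 2 * B ^ a * (r / (1 + r)) := by
  have h1r : (0 : ℝ) < 1 + r := by linarith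
  set s := r / (1 + r) with hs
  have hs0 : 0 ≤ s := div_nonneg hr h1r.le
  have hs1 : s ≤ 1 := by
    rw [hs, div_le_one h1r]; linarith
  have hBa : 1 ≤ B ^ a := Real.one_le_rpow hB ha0.le
  have hma : 0 < m ^ a := Real.rpow_pos_of_pos hm a
  have hma1 : 0 < m ^ (a - 1) := Real.rpow_pos_of_pos hm (a - 1)
  -- tangent line bound: s^a ≤ (1-a) m^a + a m^(a-1) s
  have htangent : s ^ a ≤ (1 - a) * m ^ a + a * m ^ (a - 1) * s := by
    have h := Real.geom_mean_le_arith_mean2_weighted (w₁ := 1 - a) (w₂ := a)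
      (p₁ := 1) (p₂ := s / m) (by linarith) ha0.le zero_le_one
      (div_nonneg hs0 hm.le) (by ring)
    rw [Real.one_rpow, one_mul, Real.div_rpow hs0 hm.le] at h
    have h2 := mul_le_mul_of_nonneg_left h hma.le
    have hsub : m ^ (a - 1) = m ^ a / m := by
      rw [Real.rpow_sub hm, Real.rpow_one]
    calc s ^ a = m ^ a * (s ^ a / m ^ a) := by field_simp
      _ ≤ m ^ a * ((1 - a) * 1 + a * (s / m)) := h2
      _ = (1 - a) * m ^ a + a * m ^ (a - 1) * s := by
          rw [hsub]; field_simp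
  by_cases hr1 : r ≤ 1
  · -- small case: r^a ≤ s^a + a r, and a r ≤ 2 s ≤ 2 B^a s
    have hr2s : r ≤ 2 * s := by
      rw [hs, mul_div_assoc', le_div_iff₀ h1r]; nlinarith
    have hreq : r = s * (1 + r) := by rw [hs]; field_simp
    have hBern : (1 + r) ^ a ≤ 1 + a * r :=
      rpow_one_add_le_one_add_mul_self (by linarith) ha0.le ha1.le
    have hsa1 : s ^ a ≤ 1 := Real.rpow_le_one hs0 hs1 ha0.le
    have hsa0 : 0 ≤ s ^ a := Real.rpow_nonneg hs0 a
    have hkey : r ^ a ≤ s ^ a + a * r := by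
      calc r ^ a = (s * (1 + r)) ^ a := by rw [← hreq]
        _ = s ^ a * (1 + r) ^ a := Real.mul_rpow hs0 h1r.le
        _ ≤ s ^ a * (1 + a * r) := by
            apply mul_le_mul_of_nonneg_left hBern hsa0
        _ = s ^ a + s ^ a * (a * r) := by ring
        _ ≤ s ^ a + 1 * (a * r) := by
            have : 0 ≤ a * r := mul_nonneg ha0.le hr
            nlinarith
        _ = s ^ a + a * r := by ring
    have har : a * r ≤ 2 * B ^ a * s := by
      have h1 : a * r ≤ r := by nlinarith
      have h2 : (2 : ℝ) * s ≤ 2 * B ^ a * s := by nlinarith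
      linarith
    linarith
  · -- large case: r > 1, so s ≥ 1/2 and r^a ≤ B^a ≤ 2 B^a s
    push_neg at hr1
    have hs2 : 1 / 2 ≤ s := by
      rw [hs, le_div_iff₀ h1r]; linarith
    have hra : r ^ a ≤ B ^ a := Real.rpow_le_rpow hr hrB ha0.le
    have h2 : B ^ a ≤ 2 * B ^ a * s := by nlinarith
    have hT0 : 0 ≤ (1 - a) * m ^ a + a * m ^ (a - 1) * s := by
      have := mul_nonneg (mul_nonneg ha0.le hma1.le) hs0
      nlinarith
    linarith

/-- The moment bound (2.59)–(2.60): if `ρ : Ω → [0, M]`, `q = ρ/(1+ρ)`,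
`E[q] ≤ 2(d-1) e^{-cL^γ}` and `ρ ≤ κ^{-(L+3)}` a.s., then for `a ∈ (0,1)` and
`c' ∈ (0,c)`:
`E[ρ^a] ≤ (2(d-1))^a e^{(c'-c) a L^γ} + 4(d-1) κ^{-a(L+3)} e^{-c L^γ}`. -/
theorem moment_bound_of_exit_estimate
    {Ω : Type*} [MeasurableSpace Ω] (ℙ : Measure Ω) [IsProbabilityMeasure ℙ]
    (d : ℕ) (hd : 2 ≤ d) (κ : ℝ) (hκ0 : 0 < κ) (hκ1 : κ < 1)
    (M : ℝ) (hM : 1 ≤ M) (ρ : Ω → ℝ) (hmeas : Measurable ρ)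
    (hρ0 : ∀ ω, 0 ≤ ρ ω) (hρM : ∀ ω, ρ ω ≤ M)
    (γ c L : ℝ) (hγ : 1/2 < γ ∧ γ < 1) (hc : 0 < c) (hL : 1 ≤ L)
    (hq : ∫ ω, ρ ω / (1 + ρ ω) ∂ℙ ≤ 2 * ((d : ℝ) - 1) * Real.exp (-c * L ^ γ))
    (hρbdd : ∀ᵐ ω ∂ℙ, ρ ω ≤ κ ^ (-(L + 3)))
    (a : ℝ) (ha : 0 < a ∧ a < 1) (c' : ℝ) (hc' : 0 < c' ∧ c' < c) :
    ∫ ω, (ρ ω) ^ a ∂ℙ ≤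
      (2 * ((d : ℝ) - 1)) ^ a * Real.exp ((c' - c) * a * L ^ γ) +
        4 * ((d : ℝ) - 1) * κ ^ (-(a * (L + 3))) * Real.exp (-c * L ^ γ) := by
  obtain ⟨ha0, ha1⟩ := ha
  obtain ⟨hc'0, hc'c⟩ := hc'
  have hd1 : (1 : ℝ) ≤ (d : ℝ) - 1 := by
    have : (2 : ℝ) ≤ (d : ℝ) := by exact_mod_cast hd
    linarith
  set m : ℝ := 2 * ((d : ℝ) - 1) * Real.exp (-c * L ^ γ) with hmdef
  have hm : 0 < m := by positivity
  set B : ℝ := κ ^ (-(L + 3)) with hBdef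
  have hB1 : 1 ≤ B := Real.one_le_rpow_of_pos_of_le_one_of_nonpos hκ0 hκ1.le (by linarith)
  have hBa1 : 1 ≤ B ^ a := Real.one_le_rpow hB1 ha0.le
  have hma1 : 0 < m ^ (a - 1) := Real.rpow_pos_of_pos hm _
  -- q and integrability
  set q : Ω → ℝ := fun ω => ρ ω / (1 + ρ ω) with hqdef
  have hqmeas : Measurable q := hmeas.div (measurable_const.add hmeas)
  have h1ρ : ∀ ω, (0 : ℝ) < 1 + ρ ω := fun ω => by have := hρ0 ω; linarith
  have hq0 : ∀ ω, 0 ≤ q ω := fun ω => div_nonneg (hρ0 ω) (h1ρ ω).le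
  have hq1 : ∀ ω, q ω ≤ 1 := fun ω => by
    rw [hqdef, div_le_one (h1ρ ω)]; linarith
  have hqint : Integrable q ℙ := by
    refine Integrable.mono' (integrable_const (1 : ℝ)) hqmeas.aestronglyMeasurable ?_
    filter_upwards with ω
    rw [Real.norm_eq_abs, abs_of_nonneg (hq0 ω)]
    exact hq1 ω
  have hρaint : Integrable (fun ω => ρ ω ^ a) ℙ := by
    refine Integrable.mono' (integrable_const (M ^ a))
      (((Real.continuous_rpow_const ha0.le).measurable.comp hmeas).aestronglyMeasurable) ?_
    filter_upwards with ω
    rw [Real.norm_eq_abs, abs_of_nonneg (Real.rpow_nonneg (hρ0 ω) a)]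
    exact Real.rpow_le_rpow (hρ0 ω) (hρM ω) ha0.le
  have hqm : ∫ ω, q ω ∂ℙ ≤ m := hq
  -- main estimate
  have hmain : ∫ ω, (ρ ω) ^ a ∂ℙ ≤ m ^ a + 2 * B ^ a * m := by
    have hstep : ∫ ω, (ρ ω) ^ a ∂ℙ ≤
        ∫ ω, (1 - a) * m ^ a + (a * m ^ (a - 1) + 2 * B ^ a) * q ω ∂ℙ := by
      refine integral_mono_ae hρaint ?_ ?_
      · exact (integrable_const _).add (hqint.const_mul _)
      · filter_upwards [hρbdd] with ω hω
        have := moment_bound_pointwise (hρ0 ω) hω hB1 hm ha0 ha1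
        rw [hqdef]
        dsimp only
        nlinarith [this]
    have heval : ∫ ω, (1 - a) * m ^ a + (a * m ^ (a - 1) + 2 * B ^ a) * q ω ∂ℙ
        = (1 - a) * m ^ a + (a * m ^ (a - 1) + 2 * B ^ a) * ∫ ω, q ω ∂ℙ := by
      rw [integral_add (integrable_const _) (hqint.const_mul _), integral_const,
        integral_const_mul]
      simp
    have hcoef : 0 ≤ a * m ^ (a - 1) + 2 * B ^ a := by positivity
    have hfin : (1 - a) * m ^ a + (a * m ^ (a - 1) + 2 * B ^ a) * m = m ^ a + 2 * B ^ a * m := by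
      have : m ^ (a - 1) * m = m ^ a := by
        rw [Real.rpow_sub hm, Real.rpow_one]; field_simp
      nlinarith [this]
    calc ∫ ω, (ρ ω) ^ a ∂ℙ
        ≤ (1 - a) * m ^ a + (a * m ^ (a - 1) + 2 * B ^ a) * ∫ ω, q ω ∂ℙ := by
          rw [← heval]; exact hstep
      _ ≤ (1 - a) * m ^ a + (a * m ^ (a - 1) + 2 * B ^ a) * m := by
          exact add_le_add_right (mul_le_mul_of_nonneg_left hqm hcoef) _
      _ = m ^ a + 2 * B ^ a * m := hfin
  -- identify the right-hand side
  have hLγ : 0 ≤ L ^ γ := Real.rpow_nonneg (by linarith) γ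
  have hma_eq : m ^ a = (2 * ((d : ℝ) - 1)) ^ a * Real.exp (-c * L ^ γ * a) := by
    rw [hmdef, Real.mul_rpow (by linarith) (Real.exp_pos _).le, ← Real.exp_mul]
  have h1 : m ^ a ≤ (2 * ((d : ℝ) - 1)) ^ a * Real.exp ((c' - c) * a * L ^ γ) := by
    rw [hma_eq]
    have hexp : Real.exp (-c * L ^ γ * a) ≤ Real.exp ((c' - c) * a * L ^ γ) := by
      apply Real.exp_le_exp.2
      nlinarith [mul_nonneg (mul_nonneg hc'0.le ha0.le) hLγ]
    have h2d : (0 : ℝ) ≤ (2 * ((d : ℝ) - 1)) ^ a := Real.rpow_nonneg (by linarith) a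
    exact mul_le_mul_of_nonneg_left hexp h2d
  have h2 : 2 * B ^ a * m = 4 * ((d : ℝ) - 1) * κ ^ (-(a * (L + 3))) * Real.exp (-c * L ^ γ) := by
    have hBa : B ^ a = κ ^ (-(a * (L + 3))) := by
      rw [hBdef, ← Real.rpow_mul hκ0.le]
      ring_nf
    rw [hBa, hmdef]; ring
  calc ∫ ω, (ρ ω) ^ a ∂ℙ ≤ m ^ a + 2 * B ^ a * m := hmain
    _ ≤ (2 * ((d : ℝ) - 1)) ^ a * Real.exp ((c' - c) * a * L ^ γ)
        + 4 * ((d : ℝ) - 1) * κ ^ (-(a * (L + 3))) * Real.exp (-c * L ^ γ) := by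
      rw [← h2]; exact add_le_add_left h1 _
end
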